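/- Let P and Q be any two points of P^2 such that P ⋆ Q is defined (i.e. p_i q_i ≠ 0 for some i). Then for all integers m, n ≥ 1, I(P)^m ⋆ I(Q)^n ⊇ I(P ⋆ Q)^{m+n−1}. -/

import Mathlib

open MvPolynomial

noncomputable section

variable {K : Type*} [Field K]

/-- The Hadamard product of two ideals `I, J ⊆ K[x_0,x_1,x_2]`: introduce new variables
`y_0,y_1,y_2` and `z_0,z_1,z_2` (encoded via a sum type), map `I` via `x_i ↦ y_i`, `J` via
`x_i ↦ z_i`, add the relations `x_i − y_i z_i`, and eliminate `y, z` (i.e. take the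
preimage in `K[x_0,x_1,x_2]`). -/
def hadamard (I J : Ideal (MvPolynomial (Fin 3) K)) : Ideal (MvPolynomial (Fin 3) K) :=
  Ideal.comap
    (rename (Sum.inl : Fin 3 → Fin 3 ⊕ (Fin 3 ⊕ Fin 3)))
    (Ideal.map (rename (fun i : Fin 3 => (Sum.inr (Sum.inl i) : Fin 3 ⊕ (Fin 3 ⊕ Fin 3)))) I
      + Ideal.map (rename (fun i : Fin 3 => (Sum.inr (Sum.inr i) : Fin 3 ⊕ (Fin 3 ⊕ Fin 3)))) J
      + Ideal.span { f | ∃ i : Fin 3,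
          f = X (Sum.inl i) - X (Sum.inr (Sum.inl i)) * X (Sum.inr (Sum.inr i)) })

/-- The homogeneous vanishing ideal of the point `P = [p_0:p_1:p_2] ∈ ℙ²`, generated by
the forms `p_j x_i − p_i x_j`. -/
def pointIdeal (p : Fin 3 → K) : Ideal (MvPolynomial (Fin 3) K) :=
  Ideal.span { f | ∃ i j : Fin 3, f = C (p j) * X i - C (p i) * X j }

/-- The irrelevant ideal `𝔪 = ⟨x_0,x_1,x_2⟩` of `K[x_0,x_1,x_2]`. -/
def irrelevantIdeal (K : Type*) [Field K] : Ideal (MvPolynomial (Fin 3) K) :=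
  Ideal.span (Set.range X)

/-- Substituting `h i` for `X i` changes a polynomial by an element of the ideal
generated by the `X i - h i`. -/
lemma sub_aeval_mem_span {σ R : Type*} [CommRing R] (h : σ → MvPolynomial σ R)
    (g : MvPolynomial σ R) :
    g - aeval h g ∈ Ideal.span (Set.range fun i => (X i : MvPolynomial σ R) - h i) := by
  induction g using MvPolynomial.induction_on with
  | C a => simp
  | add f g hf hg =>
    rw [map_add]
    have : f + g - (aeval h f + aeval h g) = (f - aeval h f) + (g - aeval h g) := by ring
    rw [this]; exact Ideal.add_mem _ hf hg
  | mul_X f i hf =>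
    rw [map_mul, aeval_X]
    have : f * X i - aeval h f * h i
        = (f - aeval h f) * X i + aeval h f * (X i - h i) := by ring
    rw [this]
    exact Ideal.add_mem _ (Ideal.mul_mem_right _ _ hf)
      (Ideal.mul_mem_left _ _ (Ideal.subset_span ⟨i, rfl⟩))

/-- `(A + B) ^ k ≤ A ^ m + B ^ n` when `m + n = k + 1`. -/
lemma add_pow_le_pow_add_pow {R : Type*} [CommRing R] (A B : Ideal R) :
    ∀ (k m n : ℕ), m + n = k + 1 → (A + B) ^ k ≤ A ^ m + B ^ n := by
  intro k
  induction k with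
  | zero =>
    intro m n hmn
    rcases Nat.eq_zero_or_pos m with hm | hm
    · subst hm
      simpa [Ideal.one_eq_top] using le_sup_left (a := A ^ 0) (b := B ^ n)
    · have : n = 0 := by omega
      subst this
      simpa [Ideal.one_eq_top] using le_sup_right (a := A ^ m) (b := B ^ 0)
  | succ k ih =>
    intro m n hmn
    rcases Nat.eq_zero_or_pos m with hm | hm
    · subst hm
      refine le_trans le_top ?_
      simpa [Ideal.one_eq_top] using le_sup_left (a := A ^ 0) (b := B ^ n)
    rcases Nat.eq_zero_or_pos n with hn | hn
    · subst hn
      refine le_trans le_top ?_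
      simpa [Ideal.one_eq_top] using le_sup_right (a := A ^ m) (b := B ^ 0)
    obtain ⟨m', rfl⟩ : ∃ m', m = m' + 1 := ⟨m - 1, by omega⟩
    obtain ⟨n', rfl⟩ : ∃ n', n = n' + 1 := ⟨n - 1, by omega⟩
    rw [pow_succ', add_mul]
    have hA : A * (A + B) ^ k ≤ A ^ (m' + 1) + B ^ (n' + 1) := by
      calc A * (A + B) ^ k ≤ A * (A ^ m' + B ^ (n' + 1)) :=
            Ideal.mul_mono_right (ih m' (n' + 1) (by omega))
        _ = A * A ^ m' + A * B ^ (n' + 1) := by rw [mul_add]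
        _ ≤ A ^ (m' + 1) + B ^ (n' + 1) := by
            gcongr
            · rw [← pow_succ']
            · exact Ideal.mul_le_right
    have hB : B * (A + B) ^ k ≤ A ^ (m' + 1) + B ^ (n' + 1) := by
      calc B * (A + B) ^ k ≤ B * (A ^ (m' + 1) + B ^ n') :=
            Ideal.mul_mono_right (ih (m' + 1) n' (by omega))
        _ = B * A ^ (m' + 1) + B * B ^ n' := by rw [mul_add]
        _ ≤ A ^ (m' + 1) + B ^ (n' + 1) := by
            gcongr
            · exact Ideal.mul_le_right
            · rw [← pow_succ']
    calc A * (A + B) ^ k + B * (A + B) ^ k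
        ≤ (A ^ (m' + 1) + B ^ (n' + 1)) + (A ^ (m' + 1) + B ^ (n' + 1)) := by gcongr
      _ = A ^ (m' + 1) + B ^ (n' + 1) := by
          simp [Ideal.add_eq_sup]

/-- If `P, Q ∈ ℙ²` are points such that `P ⋆ Q` is defined (i.e. `p_i q_i ≠ 0` for some
`i`), then for all `m, n ≥ 1`, `I(P ⋆ Q)^{m+n−1} ⊆ I(P)^m ⋆ I(Q)^n`. -/
theorem pointIdeal_pow_le_hadamard [IsAlgClosed K] (p q : Fin 3 → K)
    (hp : p ≠ 0) (hq : q ≠ 0) (hpq : ∃ i, p i * q i ≠ 0)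
    (m n : ℕ) (hm : 1 ≤ m) (hn : 1 ≤ n) :
    pointIdeal (fun i => p i * q i) ^ (m + n - 1)
      ≤ hadamard (pointIdeal p ^ m) (pointIdeal q ^ n) := by
  classical
  set σ := (Fin 3 ⊕ (Fin 3 ⊕ Fin 3))
  set yv : Fin 3 → σ := fun i => Sum.inr (Sum.inl i) with hyv
  set zv : Fin 3 → σ := fun i => Sum.inr (Sum.inr i) with hzv
  set w : Fin 3 → MvPolynomial σ K := fun i => X (yv i) * X (zv i) with hw
  set h : σ → MvPolynomial σ K := Sum.elim w (fun s => X (Sum.inr s)) with hh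
  set A' : Ideal (MvPolynomial σ K) := Ideal.map (rename yv) (pointIdeal p) with hA'
  set B' : Ideal (MvPolynomial σ K) := Ideal.map (rename zv) (pointIdeal q) with hB'
  set T3 : Ideal (MvPolynomial σ K) := Ideal.span { f | ∃ i : Fin 3,
      f = X (Sum.inl i) - X (Sum.inr (Sum.inl i)) * X (Sum.inr (Sum.inr i)) } with hT3
  intro f hf
  rw [hadamard, Ideal.mem_comap]
  -- total ideal
  have hTtot : (rename (Sum.inl : Fin 3 → σ)) f ∈
      Ideal.map (rename yv) (pointIdeal p ^ m) + Ideal.map (rename zv) (pointIdeal q ^ n)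
        + T3 := by
    have hsplit : (rename (Sum.inl : Fin 3 → σ)) f
        = ((rename (Sum.inl : Fin 3 → σ)) f - aeval h ((rename (Sum.inl : Fin 3 → σ)) f))
          + aeval w f := by
      rw [aeval_rename]
      have : h ∘ (Sum.inl : Fin 3 → σ) = w := rfl
      rw [this]; ring
    rw [hsplit, Ideal.add_eq_sup]
    refine Ideal.add_mem _ ?_ ?_
    · -- the correction term lies in T3
      refine Submodule.mem_sup_right ?_
      have hspan : Ideal.span (Set.range fun i => (X i : MvPolynomial σ K) - h i) ≤ T3 := by
        rw [Ideal.span_le]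
        rintro _ ⟨j, rfl⟩
        cases j with
        | inl i => exact Ideal.subset_span ⟨i, rfl⟩
        | inr s => simp [hh]
      exact hspan (sub_aeval_mem_span h _)
    · -- the substituted part lies in A'^m + B'^n
      refine Submodule.mem_sup_left ?_
      have key : Ideal.map (aeval w) (pointIdeal (fun i => p i * q i)) ≤ A' + B' := by
        rw [pointIdeal, Ideal.map_span, Ideal.span_le]
        rintro _ ⟨_, ⟨i, j, rfl⟩, rfl⟩
        have mem1 : (C (p j) * X (yv i) - C (p i) * X (yv j) : MvPolynomial σ K) ∈ A' := by
          have := Ideal.mem_map_of_mem (rename yv)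
            (Ideal.subset_span ⟨i, j, rfl⟩ :
              (C (p j) * X i - C (p i) * X j : MvPolynomial (Fin 3) K) ∈ pointIdeal p)
          simpa [hA', pointIdeal] using this
        have mem2 : (C (q j) * X (zv i) - C (q i) * X (zv j) : MvPolynomial σ K) ∈ B' := by
          have := Ideal.mem_map_of_mem (rename zv)
            (Ideal.subset_span ⟨i, j, rfl⟩ :
              (C (q j) * X i - C (q i) * X j : MvPolynomial (Fin 3) K) ∈ pointIdeal q)
          simpa [hB', pointIdeal] using this
        have identity : aeval w (C (p j * q j) * X i - C (p i * q i) * X j)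
            = (C (q j) * X (zv i)) * (C (p j) * X (yv i) - C (p i) * X (yv j))
              + (C (p i) * X (yv j)) * (C (q j) * X (zv i) - C (q i) * X (zv j)) := by
          simp only [map_sub, map_mul, aeval_X, aeval_C, algebraMap_eq, hw, C_mul]
          ring
        rw [SetLike.mem_coe, identity]
        rw [Ideal.add_eq_sup]
        exact Ideal.add_mem _
          (Submodule.mem_sup_left (Ideal.mul_mem_left _ _ mem1))
          (Submodule.mem_sup_right (Ideal.mul_mem_left _ _ mem2))
      have step1 : aeval w f ∈ Ideal.map (aeval w)
          (pointIdeal (fun i => p i * q i) ^ (m + n - 1)) :=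
        Ideal.mem_map_of_mem _ hf
      rw [Ideal.map_pow] at step1
      have step2 : Ideal.map (aeval w) (pointIdeal (fun i => p i * q i)) ^ (m + n - 1)
          ≤ (A' + B') ^ (m + n - 1) := Ideal.pow_right_mono key _
      have step3 : (A' + B') ^ (m + n - 1) ≤ A' ^ m + B' ^ n :=
        add_pow_le_pow_add_pow A' B' (m + n - 1) m n (by omega)
      have step4 : A' ^ m + B' ^ n
          = Ideal.map (rename yv) (pointIdeal p ^ m)
            + Ideal.map (rename zv) (pointIdeal q ^ n) := by
        rw [hA', hB', Ideal.map_pow, Ideal.map_pow]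
      rw [← step4]
      exact step3 (step2 step1)
  exact hTtot
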